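/- Let n ≥ 3 be an integer and λ > 0 a real number with λ ≠ n and λ ≠ n+1. If f ∈ ℝ⁴ satisfies B(n,λ)·f = 0, then there exists h ∈ ℝ⁴ whose first and second components vanish such that M(n,λ)·h = f. -/

import Mathlib

open Matrix

/-- The indicial family `I(D Ric − Λ, λ)` (with `Λ = n`) of the linearized Einstein
operator on asymptotically de Sitter space, in the scalar block decomposition. -/
noncomputable def M (n : ℕ) (lam : ℝ) : Matrix (Fin 4) (Fin 4) ℝ :=
  (1 / 2 : ℝ) • !![(n : ℝ) * (lam - 2), 0, -(n : ℝ) * lam * (lam - 2), 0;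
                   0, 0, 0, 0;
                   2 * (n : ℝ) - lam, 0, lam * (lam - 2 * (n : ℝ)), 0;
                   0, 0, 0, lam * (lam - (n : ℝ))]

/-- The indicial family `I(δG, λ)` of the divergence composed with trace reversal,
in the scalar block decomposition. -/
noncomputable def B (n : ℕ) (lam : ℝ) : Matrix (Fin 2) (Fin 4) ℝ :=
  (1 / 2 : ℝ) • !![lam - 2 * (n : ℝ), 0, (n : ℝ) * (lam - 2), 0;
                   0, 2 * (lam - ((n : ℝ) + 1)), 0, 0]

/-- Solvability of the linearized Einstein equation at a non-exceptional indicial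
weight: if `λ > 0`, `λ ∉ {n, n+1}` and `B(n,λ)f = 0`, then `f = M(n,λ)h` for some `h`
whose first two components vanish. -/
theorem solvability_linearized_einstein (n : ℕ) (hn : 3 ≤ n) (lam : ℝ)
    (hpos : 0 < lam) (hne : lam ≠ (n : ℝ)) (hne' : lam ≠ (n : ℝ) + 1)
    (f : Fin 4 → ℝ) (hf : (B n lam).mulVec f = 0) :
    ∃ h : Fin 4 → ℝ, h 0 = 0 ∧ h 1 = 0 ∧ (M n lam).mulVec h = f := by
  have hlam : lam ≠ 0 := ne_of_gt hpos
  have hlamn : lam - (n : ℝ) ≠ 0 := sub_ne_zero.mpr hne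
  set a : ℝ := lam - 2 * (n : ℝ) with ha
  set b : ℝ := (n : ℝ) * (lam - 2) with hb
  have hn3 : (3 : ℝ) ≤ (n : ℝ) := by exact_mod_cast hn
  have hab : a ^ 2 + b ^ 2 ≠ 0 := by
    intro h
    have ha0 : a = 0 := by nlinarith [sq_nonneg a, sq_nonneg b]
    have hb0 : b = 0 := by nlinarith [sq_nonneg a, sq_nonneg b]
    -- a = 0 means lam = 2n, b = 0 means n(lam-2)=0 ⇒ lam = 2 ⇒ n = 1, contradiction n ≥ 3
    have hlam2 : lam = 2 * (n : ℝ) := by linarith [sub_eq_zero.mp ha0]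
    have : (n : ℝ) * (lam - 2) = 0 := hb0
    rcases mul_eq_zero.mp this with h1 | h2
    · nlinarith
    · have : lam = 2 := by linarith [sub_eq_zero.mp h2]
      nlinarith
  -- constraints from hf
  have h0 := congrFun hf 0
  have h1 := congrFun hf 1
  simp [B, mulVec, dotProduct, Fin.sum_univ_four] at h0 h1
  have hf1 : f 1 = 0 := by
    rcases h1 with h | h
    · exact absurd (by linarith [h] : lam = (n:ℝ) + 1) hne'
    · exact h
  have hcon : a * f 0 + b * f 2 = 0 := by
    have : (lam - 2 * (n : ℝ)) * f 0 + (n : ℝ) * (lam - 2) * f 2 = 0 := by linarith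
    rw [ha, hb]; linarith
  set t : ℝ := (a * f 2 - b * f 0) / (a ^ 2 + b ^ 2) with ht
  have htf0 : -b * t = f 0 := by
    rw [ht]; field_simp; linear_combination (-a) * hcon
  have htf2 : a * t = f 2 := by
    rw [ht]; field_simp; linear_combination (-b) * hcon
  refine ⟨![0, 0, 2 * t / lam, 2 * f 3 / (lam * (lam - (n : ℝ)))], rfl, rfl, ?_⟩
  funext i
  fin_cases i <;>
    simp [M, mulVec, dotProduct, Fin.sum_univ_four, hf1]
  · -- row 0 : (1/2)(-n lam (lam-2)) * (2t/lam) = f 0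
    rw [← htf0, hb]; field_simp
  · rw [← htf2, ha]; field_simp
  · field_simp
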